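/- arXiv:1310.5346 — 4 statements merged into one kernel-verified Lean document; each statement's English description precedes it below -/
import Mathlib

section
/- Let p ≥ 5 be a prime number. Then for any positive integers n > m > k ≥ 1, the polynomial x^n + x^m + x^k + p is irreducible over ℚ. -/
open Polynomial

private lemma one_lt_multiset_prod {M : Multiset ℝ} (h0 : M ≠ 0) (h : ∀ x ∈ M, 1 < x) :
    1 < M.prod := by
  obtain ⟨a, ha⟩ := Multiset.exists_mem_of_ne_zero h0
  rw [← Multiset.cons_erase ha, Multiset.prod_cons]
  have h1 : 1 < a := h a ha
  have h2 : 1 ≤ (M.erase a).prod :=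
    Multiset.one_le_prod fun x hx => (h x (Multiset.mem_of_mem_erase hx)).le
  calc (1 : ℝ) < a := h1
    _ = a * 1 := (mul_one a).symm
    _ ≤ a * (M.erase a).prod := by
        exact mul_le_mul_of_nonneg_left h2 (by linarith)

private lemma aux_eval_zero {g : ℤ[X]} (hg : g.Monic) (hd : 1 ≤ g.natDegree)
    (hroots : ∀ z : ℂ, (Polynomial.aeval z) g = 0 → 1 < ‖z‖) :
    1 < |g.eval 0| := by
  set G : ℂ[X] := g.map (Int.castRingHom ℂ) with hGdef
  have hGm : G.Monic := hg.map _
  have hsp : G.Splits := IsAlgClosed.splits G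
  have hcard : G.roots.card = G.natDegree := splits_iff_card_roots.mp hsp
  have hGdeg : G.natDegree = g.natDegree := hg.natDegree_map _
  have hroot' : ∀ a ∈ G.roots, 1 < ‖a‖ := by
    intro a haroot
    apply hroots
    have hGne : G ≠ 0 := hGm.ne_zero
    rw [aeval_def, ← eval_map]
    exact (mem_roots hGne).mp haroot
  have heval : G.eval 0 = G.leadingCoeff * (G.roots.map fun a => (0:ℂ) - a).prod :=
    hsp.eval_eq_prod_roots 0
  have habs : ‖G.eval 0‖ = (G.roots.map (‖·‖)).prod := by
    rw [heval, hGm.leadingCoeff, one_mul]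
    refine (map_multiset_prod (normHom : ℂ →*₀ ℝ) _).trans ?_
    rw [Multiset.map_map]
    congr 1
    apply Multiset.map_congr rfl
    intro a _
    simp
  have hne : G.roots ≠ 0 := by
    intro h
    rw [h, Multiset.card_zero] at hcard
    omega
  have hprod : 1 < (G.roots.map (‖·‖)).prod := by
    apply one_lt_multiset_prod
    · simpa using hne
    · intro x hx
      obtain ⟨a, ha, rfl⟩ := Multiset.mem_map.mp hx
      exact hroot' a ha
  have heval0 : G.eval 0 = ((g.eval 0 : ℤ) : ℂ) := by
    rw [hGdef, eval_zero_map]; rfl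
  rw [heval0, Complex.norm_intCast] at habs
  have : (1 : ℝ) < |((g.eval 0 : ℤ) : ℝ)| := habs ▸ hprod
  exact_mod_cast this

theorem quadrinomial_prime_irreducible (p : ℕ) (hp : p.Prime) (hp5 : 5 ≤ p)
    (n m k : ℕ) (h1 : n > m) (h2 : m > k) (h3 : k ≥ 1) :
    Irreducible ((X : ℚ[X])^n + X^m + X^k + C (p : ℚ)) := by
  have hk0 : k ≠ 0 := by omega
  have hm0 : m ≠ 0 := by omega
  have hn0 : n ≠ 0 := by omega
  set f : ℤ[X] := X^n + X^m + X^k + C (p : ℤ) with hfdef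
  -- degree of the tail is < n
  have hdeg_tail : (X^m + X^k + C (p : ℤ)).degree < (n : WithBot ℕ) := by
    apply lt_of_le_of_lt (degree_add_le _ _)
    rw [max_lt_iff]
    constructor
    · apply lt_of_le_of_lt (degree_add_le _ _)
      rw [max_lt_iff]
      constructor
      · rw [degree_X_pow]; exact_mod_cast h1
      · rw [degree_X_pow]; exact_mod_cast lt_trans h2 h1
    · exact lt_of_le_of_lt degree_C_le (by exact_mod_cast Nat.pos_of_ne_zero hn0)
  have hfmonic : f.Monic := by
    rw [hfdef, add_assoc, add_assoc, ← add_assoc (X^m)]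
    exact monic_X_pow_add hdeg_tail
  have hfdegree : f.natDegree = n := by
    have : f.degree = n := by
      rw [hfdef, add_assoc, add_assoc, ← add_assoc (X^m)]
      rw [degree_add_eq_left_of_degree_lt (by rwa [degree_X_pow])]
      exact degree_X_pow n
    exact natDegree_eq_of_degree_eq_some this
  -- all complex roots have modulus > 1
  have hroots : ∀ z : ℂ, (Polynomial.aeval z) f = 0 → 1 < ‖z‖ := by
    intro z hz
    rw [hfdef] at hz
    simp only [map_add, map_pow, aeval_X, map_intCast, map_natCast, aeval_C, eq_intCast] at hz
    push_cast at hz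
    by_contra hle
    push_neg at hle
    have hzeq : ((p : ℕ) : ℂ) = -(z^n + z^m + z^k) := by linear_combination hz
    have habs : (p : ℝ) = ‖z^n + z^m + z^k‖ := by
      have := congrArg (‖·‖) hzeq
      rwa [norm_neg, Complex.norm_natCast] at this
    have hb : ∀ j : ℕ, ‖z ^ j‖ ≤ 1 := by
      intro j
      rw [norm_pow]
      exact pow_le_one₀ (norm_nonneg z) hle
    have h3' : ‖z^n + z^m + z^k‖ ≤ 3 := by
      calc ‖z^n + z^m + z^k‖
          ≤ ‖z^n + z^m‖ + ‖z^k‖ := norm_add_le _ _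
        _ ≤ (‖z^n‖ + ‖z^m‖) + ‖z^k‖ := by
            have := norm_add_le (z^n) (z^m); linarith
        _ ≤ 1 + 1 + 1 := by have := hb n; have := hb m; have := hb k; linarith
        _ = 3 := by norm_num
    have hp5' : (5 : ℝ) ≤ (p : ℝ) := by exact_mod_cast hp5
    linarith
  -- f is irreducible over ℤ
  have hfeval0 : f.eval 0 = (p : ℤ) := by
    simp [hfdef, zero_pow hn0, zero_pow hm0, zero_pow hk0]
  have key : ∀ q : ℤ[X], q.Monic → 1 ≤ q.natDegree → q ∣ f → ¬ IsUnit (q.eval 0) := by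
    intro q hqm hqd hqdvd hunit
    have hq1 : 1 < |q.eval 0| := by
      apply aux_eval_zero hqm hqd
      intro z hz
      obtain ⟨r, hr⟩ := hqdvd
      apply hroots
      rw [hr, map_mul, hz, zero_mul]
    rw [Int.isUnit_iff] at hunit
    rcases hunit with h | h <;> rw [h] at hq1 <;> norm_num at hq1
  have hfirr : Irreducible f := by
    constructor
    · exact f.not_isUnit_of_natDegree_pos (by omega)
    · intro a b hab
      by_contra hcon
      push_neg at hcon
      obtain ⟨hna, hnb⟩ := hcon
      have hlc : a.leadingCoeff * b.leadingCoeff = 1 := by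
        rw [← leadingCoeff_mul, ← hab, hfmonic.leadingCoeff]
      set a1 := C b.leadingCoeff * a with ha1def
      set b1 := C a.leadingCoeff * b with hb1def
      have ha1m : a1.Monic := by
        unfold a1
        unfold Monic
        rw [leadingCoeff_mul, leadingCoeff_C, mul_comm]
        exact hlc
      have hb1m : b1.Monic := by
        unfold b1
        unfold Monic
        rw [leadingCoeff_mul, leadingCoeff_C]
        exact hlc
      have hab1 : a1 * b1 = f := by
        rw [ha1def, hb1def]
        calc C b.leadingCoeff * a * (C a.leadingCoeff * b)
            = C (a.leadingCoeff * b.leadingCoeff) * (a * b) := by rw [C_mul]; ring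
          _ = f := by rw [hlc, C_1, one_mul, hab]
      have ha1d : 1 ≤ a1.natDegree := by
        by_contra h
        push_neg at h
        have h0 : a1.natDegree = 0 := by omega
        have : a1 = 1 := Monic.natDegree_eq_zero ha1m |>.mp h0
        exact hna (IsUnit.of_mul_eq_one (C b.leadingCoeff)
          (by rw [mul_comm]; exact this))
      have hb1d : 1 ≤ b1.natDegree := by
        by_contra h
        push_neg at h
        have h0 : b1.natDegree = 0 := by omega
        have : b1 = 1 := Monic.natDegree_eq_zero hb1m |>.mp h0
        exact hnb (IsUnit.of_mul_eq_one (C a.leadingCoeff)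
          (by rw [mul_comm]; exact this))
      have heval : a1.eval 0 * b1.eval 0 = (p : ℤ) := by
        rw [← eval_mul, hab1, hfeval0]
      have hpprime : Prime ((p : ℤ)) := Nat.prime_iff_prime_int.mp hp
      rcases hpprime.irreducible.isUnit_or_isUnit heval.symm with h | h
      · exact key a1 ha1m ha1d ⟨b1, hab1.symm⟩ h
      · exact key b1 hb1m hb1d ⟨a1, by rw [mul_comm]; exact hab1.symm⟩ h
  -- transfer to ℚ via Gauss's lemma
  have := (IsPrimitive.Int.irreducible_iff_irreducible_map_cast hfmonic.isPrimitive).mp hfirr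
  have hmap : f.map (Int.castRingHom ℚ) = (X : ℚ[X])^n + X^m + X^k + C (p : ℚ) := by
    rw [hfdef]
    simp [Polynomial.map_add, Polynomial.map_pow, Polynomial.map_X, Polynomial.map_C]
  rwa [hmap] at this
end

section
/- For every rational u ≠ 0, the polynomial x^6 + x^4 + x^2 + a with a = -(u-1)^2(u+1)^2(u^2+3)^2/(64 u^2) factors as -h(x)·h(-x), where h(x) = x^3 + u x^2 + ((u^2+1)/2) x + (u-1)(u+1)(u^2+3)/(8u). In particular this sextic is a product of two cubics over ℚ. -/
open Polynomial

theorem sextic_two_cubics (u : ℚ) (hu : u ≠ 0) :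
    (X : ℚ[X])^6 + X^4 + X^2 + C (-(u - 1)^2 * (u + 1)^2 * (u^2 + 3)^2 / (64 * u^2)) =
      -((X^3 + C u * X^2 + C ((u^2 + 1) / 2) * X + C ((u - 1) * (u + 1) * (u^2 + 3) / (8 * u))) *
        ((X^3 + C u * X^2 + C ((u^2 + 1) / 2) * X +
          C ((u - 1) * (u + 1) * (u^2 + 3) / (8 * u))).comp (-X))) := by
  set b : ℚ := (u^2 + 1) / 2 with hb
  set c : ℚ := (u - 1) * (u + 1) * (u^2 + 3) / (8 * u) with hc
  have hb2 : 2 * b = u^2 + 1 := by rw [hb]; ring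
  have hbc : b^2 - 2 * u * c = 1 := by rw [hb, hc]; field_simp; ring
  have hcc : -(u - 1)^2 * (u + 1)^2 * (u^2 + 3)^2 / (64 * u^2) = -c^2 := by
    rw [hc]; field_simp; ring
  rw [hcc]
  have Hb : (C (2 * b) : ℚ[X]) = C (u^2 + 1) := by rw [hb2]
  have Hc : (C (b^2 - 2 * u * c) : ℚ[X]) = C 1 := by rw [hbc]
  simp only [map_mul, map_add, map_pow, map_sub, map_one, map_ofNat] at Hb Hc
  simp only [comp, eval₂_add, eval₂_mul, eval₂_pow, eval₂_X, eval₂_C, map_neg, map_one, map_pow]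
  linear_combination -(X : ℚ[X])^4 * Hb - X^2 * Hc
end

section
/- For any integers n > m ≥ 1, the identity x^{3n} + x^{3m} + x^{n+m} - 1/27 = (x^n + x^m - 1/3)(x^{2n} - x^{n+m} + x^{2m} + x^n/3 + x^m/3 + 1/9) holds in ℚ[x], and both factors are irreducible over ℚ. -/
open Polynomial

variable {F : Type*}

lemma gtri_coeff [CommRing F] (n k : ℕ) (a b e : F) (j : ℕ) :
    (C a * X^n + C b * X^k + C e).coeff j =
      (if j = n then a else 0) + (if j = k then b else 0) + (if j = 0 then e else 0) := by
  simp [coeff_add, coeff_C, coeff_C_mul, coeff_X_pow]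

lemma tri_eq [CommRing F] (n k : ℕ) (b e : F) :
    (X^n + C b * X^k + C e : F[X]) = C 1 * X^n + C b * X^k + C e := by
  rw [C_1, one_mul]

lemma tri_coeff [CommRing F] (n k : ℕ) (b e : F) (j : ℕ) :
    (X^n + C b * X^k + C e).coeff j =
      (if j = n then 1 else 0) + (if j = k then b else 0) + (if j = 0 then e else 0) := by
  rw [tri_eq, gtri_coeff]

lemma rest_degree_lt [CommRing F] {n k : ℕ} (hkn : k < n) (b e : F) :
    degree (C b * X^k + C e : F[X]) < (n : WithBot ℕ) := by
  apply lt_of_le_of_lt (degree_add_le _ _)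
  rw [max_lt_iff]
  have hn0 : 0 < n := Nat.pos_of_ne_zero (by omega)
  constructor
  · exact lt_of_le_of_lt (degree_C_mul_X_pow_le _ _) (by exact_mod_cast hkn)
  · exact lt_of_le_of_lt degree_C_le (by exact_mod_cast hn0)

lemma tri_monic [CommRing F] [Nontrivial F] {n k : ℕ} (hkn : k < n) (b e : F) :
    (X^n + C b * X^k + C e : F[X]).Monic := by
  rw [add_assoc]
  exact monic_X_pow_add (rest_degree_lt hkn b e)

lemma gtri_degree [CommRing F] [Nontrivial F] {n k : ℕ} (hkn : k < n) {a : F} (ha : a ≠ 0)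
    (b e : F) : (C a * X^n + C b * X^k + C e : F[X]).degree = n := by
  rw [add_assoc, degree_add_eq_left_of_degree_lt, degree_C_mul_X_pow _ ha]
  rw [degree_C_mul_X_pow _ ha]
  exact rest_degree_lt hkn b e

lemma gtri_natDegree [CommRing F] [Nontrivial F] {n k : ℕ} (hkn : k < n) {a : F} (ha : a ≠ 0)
    (b e : F) : (C a * X^n + C b * X^k + C e : F[X]).natDegree = n :=
  natDegree_eq_of_degree_eq_some (gtri_degree hkn ha b e)

lemma tri_natDegree [CommRing F] [Nontrivial F] {n k : ℕ} (hkn : k < n) (b e : F) :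
    (X^n + C b * X^k + C e : F[X]).natDegree = n := by
  rw [tri_eq]; exact gtri_natDegree hkn one_ne_zero b e

lemma tri_reverse [CommRing F] [Nontrivial F] {n k : ℕ} (hkn : k < n) (b e : F) :
    (X^n + C b * X^k + C e : F[X]).reverse = C e * X^n + C b * X^(n-k) + 1 := by
  unfold reverse
  rw [tri_natDegree hkn, reflect_add, reflect_add, reflect_monomial, reflect_C_mul_X_pow,
    reflect_C, revAt_le (le_refl n), revAt_le (le_of_lt hkn)]
  simp [Nat.sub_self]
  ring

variable {F : Type*}

lemma my_reverse_reverse [CommRing F] (p : F[X]) (h0 : p.coeff 0 ≠ 0) :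
    p.reverse.reverse = p := by
  have htr : p.natTrailingDegree = 0 := natTrailingDegree_eq_zero.mpr (Or.inr h0)
  have hdeg : p.reverse.natDegree = p.natDegree := by
    rw [reverse_natDegree, htr, Nat.sub_zero]
  have h1 : p.reverse.reverse = reflect p.natDegree (reflect p.natDegree p) := by
    unfold reverse
    rw [show (reflect p.natDegree p).natDegree = p.natDegree from hdeg]
  rw [h1]
  ext i
  rw [coeff_reflect, coeff_reflect, revAt_invol]

lemma irreducible_reverse [Field F] {p : F[X]} (hp : Irreducible p) (h0 : p.coeff 0 ≠ 0) :
    Irreducible p.reverse := by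
  have hpne : p ≠ 0 := hp.ne_zero
  have hdegp : 0 < p.natDegree := hp.natDegree_pos
  have hrdeg : p.reverse.natDegree = p.natDegree := by
    rw [reverse_natDegree, natTrailingDegree_eq_zero.mpr (Or.inr h0), Nat.sub_zero]
  constructor
  · intro hu
    have := natDegree_eq_zero_of_isUnit hu
    omega
  · intro a b hab
    have hc0 : a.coeff 0 * b.coeff 0 ≠ 0 := by
      rw [← mul_coeff_zero, ← hab, coeff_zero_reverse]
      exact leadingCoeff_ne_zero.mpr hpne
    have ha0 : a.coeff 0 ≠ 0 := fun h => hc0 (by rw [h, zero_mul])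
    have hb0 : b.coeff 0 ≠ 0 := fun h => hc0 (by rw [h, mul_zero])
    have hp2 : p = a.reverse * b.reverse := by
      rw [← reverse_mul_of_domain, ← hab, my_reverse_reverse p h0]
    rcases hp.isUnit_or_isUnit hp2 with h | h
    · left
      have hdeg0 : a.natDegree = 0 := by
        have := natDegree_eq_zero_of_isUnit h
        rwa [reverse_natDegree, natTrailingDegree_eq_zero.mpr (Or.inr ha0), Nat.sub_zero] at this
      rw [eq_C_of_natDegree_eq_zero hdeg0]
      exact isUnit_C.mpr (isUnit_iff_ne_zero.mpr ha0)
    · right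
      have hdeg0 : b.natDegree = 0 := by
        have := natDegree_eq_zero_of_isUnit h
        rwa [reverse_natDegree, natTrailingDegree_eq_zero.mpr (Or.inr hb0), Nat.sub_zero] at this
      rw [eq_C_of_natDegree_eq_zero hdeg0]
      exact isUnit_C.mpr (isUnit_iff_ne_zero.mpr hb0)

noncomputable section
abbrev Kc : Type := CyclotomicField 3 ℚ
instance : Fact (Nat.Prime 3) := ⟨by norm_num⟩
instance : IsCyclotomicExtension {3} ℚ Kc := CyclotomicField.isCyclotomicExtension 3 ℚ
instance : NumberField Kc := IsCyclotomicExtension.numberField {3} ℚ Kc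
def zK : Kc := IsCyclotomicExtension.zeta 3 ℚ Kc
lemma hzK : IsPrimitiveRoot zK 3 := IsCyclotomicExtension.zeta_spec 3 ℚ Kc
abbrev Rc : Type := NumberField.RingOfIntegers Kc
def zR : Rc := hzK.toInteger
def lam : Rc := zR - 1
lemma lam_prime : Prime lam := hzK.zeta_sub_one_prime'
lemma lam_dvd_three : lam ∣ 3 := by exact hzK.toInteger_sub_one_dvd_prime'
lemma zR_pow : zR ^ 3 = 1 := by
  exact hzK.toInteger_isPrimitiveRoot.pow_eq_one
lemma zR_ne_one : zR ≠ 1 := fun h =>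
  hzK.toInteger_isPrimitiveRoot.ne_one (by norm_num) (by exact_mod_cast h)
lemma quad : zR ^ 2 + zR + 1 = 0 := by
  have h3 : (zR - 1) * (zR ^ 2 + zR + 1) = 0 := by linear_combination zR_pow
  rcases mul_eq_zero.1 h3 with h | h
  · exact absurd (by linear_combination h) zR_ne_one
  · exact h
lemma lam_sq : lam ^ 2 = -3 * zR := by unfold lam; linear_combination quad
lemma lam_ne_zero : lam ≠ 0 := lam_prime.ne_zero
lemma lam_not_dvd_one : ¬ (lam ∣ 1) := fun h => lam_prime.not_unit (isUnit_of_dvd_one h)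
lemma lam_not_dvd_two : ¬ (lam ∣ 2) := fun h => lam_not_dvd_one (by
  have h2 := dvd_sub lam_dvd_three h
  norm_num at h2
  exact h2)

lemma exists_int_congr (s : Rc) : ∃ z : ℤ, lam ∣ s - (z : Rc) := by
  obtain ⟨f, hf⟩ := hzK.integralPowerBasis.exists_eq_aeval' s
  refine ⟨f.eval 1, ?_⟩
  have hgen : hzK.integralPowerBasis.gen = zR := hzK.integralPowerBasis_gen
  have h1 : s = (f.map (algebraMap ℤ Rc)).eval zR := by
    rw [hf, hgen, aeval_def, eval_map]
  have h2 : zR - 1 ∣ (f.map (algebraMap ℤ Rc)).eval zR - (f.map (algebraMap ℤ Rc)).eval 1 :=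
    sub_dvd_eval_sub _ _ _
  have h3 : (f.map (algebraMap ℤ Rc)).eval 1 = ((f.eval 1 : ℤ) : Rc) := by
    rw [eval_map, eval₂_at_one]
    simp
  rw [h1, ← h3]
  exact h2

lemma no_sqrt_neg_one (s : Rc) : ¬ lam ∣ s ^ 2 + 1 := by
  intro hdvd
  obtain ⟨z, hz⟩ := exists_int_congr s
  have hz2 : lam ∣ s ^ 2 - (z : Rc) ^ 2 := by
    have : s ^ 2 - (z : Rc) ^ 2 = (s - z) * (s + z) := by ring
    rw [this]
    exact dvd_mul_of_dvd_left hz _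
  have hz3 : lam ∣ (z : Rc) ^ 2 + 1 := by
    have : (z : Rc) ^ 2 + 1 = (s ^ 2 + 1) - (s ^ 2 - (z : Rc) ^ 2) := by ring
    rw [this]
    exact dvd_sub hdvd hz2
  have hcase : z % 3 = 0 ∨ z % 3 = 1 ∨ z % 3 = 2 := by omega
  obtain ⟨q, e, he, hq⟩ : ∃ q e : ℤ, (e = 0 ∨ e = 1 ∨ e = 2) ∧ z = 3 * q + e := by
    exact ⟨z / 3, z % 3, hcase, by omega⟩
  have key : ∀ c : ℤ, ((z:Rc) ^ 2 + 1) - ((c : Rc)) = 3 * ((3*q^2 + 2*q*e : ℤ) : Rc) →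
      lam ∣ (c : Rc) := by
    intro c hc
    have h3 : lam ∣ ((z:Rc)^2+1) - (c : Rc) := by
      rw [hc]; exact Dvd.dvd.mul_right lam_dvd_three _
    have := dvd_sub hz3 h3
    simpa using this
  rcases he with he | he | he <;> subst he <;> subst hq
  · have h1 : lam ∣ ((1 : ℤ) : Rc) := key 1 (by push_cast; ring)
    rw [Int.cast_one] at h1
    exact lam_not_dvd_one h1
  · have h1 : lam ∣ ((2 : ℤ) : Rc) := key 2 (by push_cast; ring)
    rw [Int.cast_two] at h1
    exact lam_not_dvd_two h1
  · have h1 : lam ∣ ((5 : ℤ) : Rc) := key 5 (by push_cast; ring)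
    have h2 : lam ∣ (2 : Rc) := by
      have h5 : ((5:ℤ) : Rc) = 5 := by push_cast; ring
      rw [h5] at h1
      have := dvd_sub h1 lam_dvd_three
      norm_num at this
      exact this
    exact lam_not_dvd_two h2

lemma core_irred (n k : ℕ) (hk0 : 0 < k) (hkn : k < n) (c d u : Rc)
    (hc : lam^2 ∣ c) (hu : IsUnit u) (hd : d = lam^2 * u) (hu1 : lam ∣ u - 1) :
    Irreducible (X^n + C c * X^k + C d : Rc[X]) := by
  set r : Rc[X] := X^n + C c * X^k + C d with hr
  have hn0 : 0 < n := lt_trans hk0 hkn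
  have hmon : r.Monic := tri_monic hkn c d
  have hdeg : r.natDegree = n := tri_natDegree hkn c d
  have hlow : ∀ j, j < n → lam^2 ∣ r.coeff j := by
    intro j hj
    rw [hr, tri_coeff, if_neg (by omega)]
    rcases eq_or_ne j k with h | h
    · have h0 : j ≠ 0 := by omega
      rw [if_pos h, if_neg h0]
      simpa using hc
    · rw [if_neg h]
      rcases eq_or_ne j 0 with h0 | h0
      · rw [if_pos h0, hd]
        simpa using Dvd.intro u rfl
      · rw [if_neg h0]; simp
  have hc0 : r.coeff 0 = d := by
    rw [hr, tri_coeff, if_neg (by omega), if_neg (by omega), if_pos rfl]; ring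
  have hune : ¬ lam ∣ u := fun h => lam_not_dvd_one (dvd_trans h hu.dvd)
  have aux : ∀ P Q : Rc[X], P.Monic → Q.Monic → 1 ≤ P.natDegree → 1 ≤ Q.natDegree →
      P * Q = r → False := by
    intro P Q hP hQ ha hb hPQ
    classical
    set a := P.natDegree with hadef
    set b := Q.natDegree with hbdef
    have hab : a + b = n := by rw [← hdeg, ← hPQ, natDegree_mul hP.ne_zero hQ.ne_zero]
    have hexP : ∃ i, ¬ lam ∣ P.coeff i := ⟨a, by rw [hP.coeff_natDegree]; exact lam_not_dvd_one⟩
    have hexQ : ∃ i, ¬ lam ∣ Q.coeff i := ⟨b, by rw [hQ.coeff_natDegree]; exact lam_not_dvd_one⟩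
    have hi0a : Nat.find hexP ≤ a := Nat.find_min' hexP (by
      rw [hP.coeff_natDegree]; exact lam_not_dvd_one)
    have hj0b : Nat.find hexQ ≤ b := Nat.find_min' hexQ (by
      rw [hQ.coeff_natDegree]; exact lam_not_dvd_one)
    set i0 := Nat.find hexP with hi0
    set j0 := Nat.find hexQ with hj0
    have hPmin : ∀ i, i < i0 → lam ∣ P.coeff i := fun i hi => not_not.mp (Nat.find_min hexP hi)
    have hQmin : ∀ i, i < j0 → lam ∣ Q.coeff i := fun i hi => not_not.mp (Nat.find_min hexQ hi)
    have hspecP : ¬ lam ∣ P.coeff i0 := Nat.find_spec hexP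
    have hspecQ : ¬ lam ∣ Q.coeff j0 := Nat.find_spec hexQ
    have hclaim : ¬ lam ∣ r.coeff (i0 + j0) := by
      intro hdvd
      rw [← hPQ, coeff_mul] at hdvd
      have hmem : ((i0, j0) : ℕ × ℕ) ∈ Finset.HasAntidiagonal.antidiagonal (i0 + j0) := by
        simp [Finset.HasAntidiagonal.mem_antidiagonal]
      rw [← Finset.add_sum_erase _ _ hmem] at hdvd
      have hrest : lam ∣ ∑ x ∈ (Finset.HasAntidiagonal.antidiagonal (i0+j0)).erase (i0, j0),
          P.coeff x.1 * Q.coeff x.2 := by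
        apply Finset.dvd_sum
        intro x hx
        obtain ⟨hxne, hxmem⟩ := Finset.mem_erase.mp hx
        have hxs : x.1 + x.2 = i0 + j0 := Finset.HasAntidiagonal.mem_antidiagonal.mp hxmem
        rcases Nat.lt_or_ge x.1 i0 with h | h
        · exact dvd_mul_of_dvd_left (hPmin _ h) _
        · have hx2 : x.2 < j0 := by
            rcases Nat.lt_or_ge i0 x.1 with h' | h'
            · omega
            · exfalso; exact hxne (Prod.ext (by omega) (by omega))
          exact dvd_mul_of_dvd_right (hQmin _ hx2) _
      have hterm : lam ∣ P.coeff i0 * Q.coeff j0 := by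
        have h2 := dvd_sub hdvd hrest
        simpa using h2
      rcases (Prime.dvd_mul lam_prime).mp hterm with h | h
      · exact hspecP h
      · exact hspecQ h
    have hij : i0 + j0 = n := by
      by_contra hne
      rcases Nat.lt_or_ge (i0 + j0) n with h | h
      · exact hclaim ((dvd_pow_self lam two_ne_zero).trans (hlow _ h))
      · have hz : r.coeff (i0 + j0) = 0 := coeff_eq_zero_of_natDegree_lt (by omega)
        exact hclaim (by rw [hz]; exact dvd_zero lam)
    have hia : i0 = a := by omega
    have hjb : j0 = b := by omega
    have hPlow : ∀ i, i < a → lam ∣ P.coeff i := fun i hi => hPmin i (by omega)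
    have hQlow : ∀ i, i < b → lam ∣ Q.coeff i := fun i hi => hQmin i (by omega)
    obtain ⟨s, hs⟩ := hPlow 0 ha
    obtain ⟨t, ht⟩ := hQlow 0 hb
    have hP0Q0 : P.coeff 0 * Q.coeff 0 = d := by
      rw [← hc0, ← hPQ, mul_coeff_zero]
    have hst : s * t = u := by
      apply mul_left_cancel₀ (pow_ne_zero 2 lam_ne_zero)
      rw [← hd, ← hP0Q0, hs, ht]; ring
    have hsu : s ∣ u := ⟨t, hst.symm⟩
    have htu : t ∣ u := ⟨s, by rw [← hst]; ring⟩
    rcases lt_trichotomy a b with hab' | hab' | hab'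
    · -- a < b : lam^2 ∣ Q.coeff 0, contradiction
      have hca : lam^2 ∣ r.coeff a := hlow a (by omega)
      rw [← hPQ, coeff_mul] at hca
      have hmem : ((a, 0) : ℕ×ℕ) ∈ Finset.HasAntidiagonal.antidiagonal a := by simp
      rw [← Finset.add_sum_erase _ _ hmem] at hca
      have hrest : lam^2 ∣ ∑ x ∈ (Finset.HasAntidiagonal.antidiagonal a).erase (a, 0),
          P.coeff x.1 * Q.coeff x.2 := by
        apply Finset.dvd_sum
        intro x hx
        obtain ⟨hxne, hxmem⟩ := Finset.mem_erase.mp hx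
        have hxs : x.1 + x.2 = a := Finset.HasAntidiagonal.mem_antidiagonal.mp hxmem
        have hx1 : x.1 < a := by
          rcases Nat.lt_or_ge x.1 a with h | h
          · exact h
          · exfalso; exact hxne (Prod.ext (by omega) (by omega))
        have hx2 : x.2 < b := by omega
        rw [pow_two]
        exact mul_dvd_mul (hPlow _ hx1) (hQlow _ hx2)
      have hQ0 : lam^2 ∣ Q.coeff 0 := by
        have h2 := dvd_sub hca hrest
        rw [hP.coeff_natDegree] at h2
        simpa using h2
      rw [ht] at hQ0
      obtain ⟨w, hw⟩ := hQ0
      have hlt : lam ∣ t := ⟨w, mul_left_cancel₀ lam_ne_zero (by linear_combination hw)⟩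
      exact hune (hlt.trans htu)
    · -- a = b
      have hca : lam^2 ∣ r.coeff a := hlow a (by omega)
      rw [← hPQ, coeff_mul] at hca
      have hmem1 : ((a, 0) : ℕ×ℕ) ∈ Finset.HasAntidiagonal.antidiagonal a := by simp
      rw [← Finset.add_sum_erase _ _ hmem1] at hca
      have hmem2 : ((0, a) : ℕ×ℕ) ∈ (Finset.HasAntidiagonal.antidiagonal a).erase (a, 0) := by
        rw [Finset.mem_erase]
        constructor
        · intro h
          have h1 : (0 : ℕ) = a := congrArg Prod.fst h
          omega
        · simp
      rw [← Finset.add_sum_erase _ _ hmem2] at hca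
      have hrest : lam^2 ∣ ∑ x ∈ ((Finset.HasAntidiagonal.antidiagonal a).erase (a, 0)).erase (0, a),
          P.coeff x.1 * Q.coeff x.2 := by
        apply Finset.dvd_sum
        intro x hx
        obtain ⟨hxne2, hx⟩ := Finset.mem_erase.mp hx
        obtain ⟨hxne1, hxmem⟩ := Finset.mem_erase.mp hx
        have hxs : x.1 + x.2 = a := Finset.HasAntidiagonal.mem_antidiagonal.mp hxmem
        have hx1 : x.1 < a := by
          rcases Nat.lt_or_ge x.1 a with h | h
          · exact h
          · exfalso; exact hxne1 (Prod.ext (by omega) (by omega))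
        have hx1' : 0 < x.1 := by
          rcases Nat.eq_zero_or_pos x.1 with h | h
          · exfalso; exact hxne2 (Prod.ext (by omega) (by omega))
          · exact h
        have hx2 : x.2 < b := by omega
        rw [pow_two]
        exact mul_dvd_mul (hPlow _ hx1) (hQlow _ hx2)
      have hsum : lam^2 ∣ P.coeff 0 + Q.coeff 0 := by
        have h2 := dvd_sub hca hrest
        rw [hP.coeff_natDegree] at h2
        have hQa : Q.coeff a = 1 := by rw [hab']; exact hQ.coeff_natDegree
        rw [hQa] at h2
        have h3 : 1 * Q.coeff 0 + (P.coeff 0 * 1 + ∑ x ∈ ((Finset.HasAntidiagonal.antidiagonal a).erase (a, 0)).erase (0, a), P.coeff x.1 * Q.coeff x.2) - ∑ x ∈ ((Finset.HasAntidiagonal.antidiagonal a).erase (a, 0)).erase (0, a), P.coeff x.1 * Q.coeff x.2 = P.coeff 0 + Q.coeff 0 := by ring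
        rwa [h3] at h2
      rw [hs, ht] at hsum
      obtain ⟨w, hw⟩ := hsum
      have hstw : s + t = lam * w := by
        apply mul_left_cancel₀ lam_ne_zero
        linear_combination hw
      have hkey : lam ∣ s^2 + 1 := by
        have h1 : s^2 + 1 = s*(s+t) - (u - 1) := by rw [← hst]; ring
        rw [h1, hstw]
        exact dvd_sub (Dvd.dvd.mul_left (Dvd.intro w rfl) s) hu1
      exact no_sqrt_neg_one s hkey
    · -- b < a : lam^2 ∣ P.coeff 0
      have hca : lam^2 ∣ r.coeff b := hlow b (by omega)
      rw [← hPQ, coeff_mul] at hca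
      have hmem : ((0, b) : ℕ×ℕ) ∈ Finset.HasAntidiagonal.antidiagonal b := by simp
      rw [← Finset.add_sum_erase _ _ hmem] at hca
      have hrest : lam^2 ∣ ∑ x ∈ (Finset.HasAntidiagonal.antidiagonal b).erase (0, b),
          P.coeff x.1 * Q.coeff x.2 := by
        apply Finset.dvd_sum
        intro x hx
        obtain ⟨hxne, hxmem⟩ := Finset.mem_erase.mp hx
        have hxs : x.1 + x.2 = b := Finset.HasAntidiagonal.mem_antidiagonal.mp hxmem
        have hx2 : x.2 < b := by
          rcases Nat.lt_or_ge x.2 b with h | h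
          · exact h
          · exfalso; exact hxne (Prod.ext (by omega) (by omega))
        have hx1 : x.1 < a := by omega
        rw [pow_two]
        exact mul_dvd_mul (hPlow _ hx1) (hQlow _ hx2)
      have hP0 : lam^2 ∣ P.coeff 0 := by
        have h2 := dvd_sub hca hrest
        have hQb : Q.coeff b = 1 := hQ.coeff_natDegree
        rw [hQb] at h2
        simpa using h2
      rw [hs] at hP0
      obtain ⟨w, hw⟩ := hP0
      have hls : lam ∣ s := ⟨w, mul_left_cancel₀ lam_ne_zero (by linear_combination hw)⟩
      exact hune (hls.trans hsu)
  constructor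
  · intro hunit
    have h0 := natDegree_eq_zero_of_isUnit hunit
    omega
  · intro P Q hPQ
    by_contra hcon
    push_neg at hcon
    obtain ⟨hPu, hQu⟩ := hcon
    have hrne : r ≠ 0 := hmon.ne_zero
    have hPne : P ≠ 0 := fun h => hrne (by rw [hPQ, h, zero_mul])
    have hQne : Q ≠ 0 := fun h => hrne (by rw [hPQ, h, mul_zero])
    have hlc : P.leadingCoeff * Q.leadingCoeff = 1 := by
      rw [← leadingCoeff_mul, ← hPQ]; exact hmon.leadingCoeff
    have hPd : 1 ≤ P.natDegree := by
      by_contra h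
      push_neg at h
      have h0 : P.natDegree = 0 := by omega
      apply hPu
      have hlcP : IsUnit P.leadingCoeff := IsUnit.of_mul_eq_one _ hlc
      rw [leadingCoeff, h0] at hlcP
      rw [eq_C_of_natDegree_eq_zero h0]
      exact isUnit_C.mpr hlcP
    have hQd : 1 ≤ Q.natDegree := by
      by_contra h
      push_neg at h
      have h0 : Q.natDegree = 0 := by omega
      apply hQu
      have hlcQ : IsUnit Q.leadingCoeff := IsUnit.of_mul_eq_one _ (by rw [mul_comm]; exact hlc)
      rw [leadingCoeff, h0] at hlcQ
      rw [eq_C_of_natDegree_eq_zero h0]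
      exact isUnit_C.mpr hlcQ
    have hCQ : (C Q.leadingCoeff : Rc[X]) ≠ 0 := by
      rw [Ne, C_eq_zero]
      exact leadingCoeff_ne_zero.mpr hQne
    have hCP : (C P.leadingCoeff : Rc[X]) ≠ 0 := by
      rw [Ne, C_eq_zero]
      exact leadingCoeff_ne_zero.mpr hPne
    have hP'mon : (C Q.leadingCoeff * P).Monic := by
      unfold Monic
      rw [leadingCoeff_mul, leadingCoeff_C, mul_comm]
      exact hlc
    have hQ'mon : (C P.leadingCoeff * Q).Monic := by
      unfold Monic
      rw [leadingCoeff_mul, leadingCoeff_C]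
      exact hlc
    have hP'deg : (C Q.leadingCoeff * P).natDegree = P.natDegree := by
      rw [natDegree_mul hCQ hPne, natDegree_C, zero_add]
    have hQ'deg : (C P.leadingCoeff * Q).natDegree = Q.natDegree := by
      rw [natDegree_mul hCP hQne, natDegree_C, zero_add]
    apply aux (C Q.leadingCoeff * P) (C P.leadingCoeff * Q) hP'mon hQ'mon
      (by omega) (by omega)
    calc C Q.leadingCoeff * P * (C P.leadingCoeff * Q)
        = C Q.leadingCoeff * C P.leadingCoeff * (P * Q) := by ring
      _ = r := by
          rw [← C_mul, mul_comm Q.leadingCoeff, hlc, C_1, one_mul, hPQ]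

lemma map_tri {F G : Type*} [CommRing F] [CommRing G] (φ : F →+* G) (n k : ℕ) (b e : F) :
    (X^n + C b * X^k + C e : F[X]).map φ = X^n + C (φ b) * X^k + C (φ e) := by
  simp [Polynomial.map_add, Polynomial.map_pow, Polynomial.map_mul, map_X, map_C]

lemma zR_ne_zero : zR ≠ 0 := by
  intro h
  have := zR_pow
  rw [h] at this
  norm_num at this

lemma three_Rc_ne_zero : (3 : Rc) ≠ 0 := by norm_num

lemma d_ne : (-3 * zR : Rc) ≠ -3 * zR^2 := by
  intro h
  have h1 : (3:Rc) * zR * (zR - 1) = 0 := by linear_combination h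
  rcases mul_eq_zero.mp h1 with h2 | h2
  · rcases mul_eq_zero.mp h2 with h3 | h3
    · exact three_Rc_ne_zero h3
    · exact zR_ne_zero h3
  · exact zR_ne_one (by linear_combination h2)

set_option maxHeartbeats 2000000 in
lemma second_factor_irred {n m : ℕ} (h1 : n > m) (h2 : m ≥ 1) :
    Irreducible ((X : ℚ[X])^(2*n) - X^(n+m) + X^(2*m) +
      C (1/3) * X^n + C (1/3) * X^m + C (1/9)) := by
  classical
  have hk0 : 0 < n - m := by omega
  have hkn : n - m < n := by omega
  have hnm : n - (n - m) = m := by omega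
  set φ : ℚ →+* Kc := (algebraMap ℚ Kc : ℚ →+* Kc) with hφ
  set φR : Rc →+* Kc := (algebraMap Rc Kc : Rc →+* Kc) with hφR
  have hφRinj : Function.Injective φR := IsFractionRing.injective Rc Kc
  have hφinj : Function.Injective φ := φ.injective
  set g : ℚ[X] := X^(2*n) - X^(n+m) + X^(2*m) + C (1/3) * X^n + C (1/3) * X^m + C (1/9)
    with hg
  set zk : Kc := φR zR with hzk
  have hzkq : zk^2 + zk + 1 = 0 := by
    have := congrArg φR quad
    simpa [map_add, map_pow, map_one, map_zero] using this
  -- the two integral trinomials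
  have hr1 : Irreducible (X^n + C (-3*zR^2) * X^(n-m) + C (-3*zR) : Rc[X]) := by
    apply core_irred n (n-m) hk0 hkn _ _ 1 ⟨zR, by rw [lam_sq]; ring⟩ isUnit_one
      (by rw [lam_sq]; ring) (by simp)
  have hr2 : Irreducible (X^n + C (-3*zR) * X^(n-m) + C (-3*zR^2) : Rc[X]) := by
    apply core_irred n (n-m) hk0 hkn _ _ zR ⟨1, by rw [lam_sq]; ring⟩
      (IsUnit.of_mul_eq_one (zR^2) (by linear_combination zR_pow))
      (by rw [lam_sq]; ring) (dvd_refl _)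
  -- map to Kc
  have hr1K : Irreducible (X^n + C (φR (-3*zR^2)) * X^(n-m) + C (φR (-3*zR)) : Kc[X]) := by
    have := ((tri_monic hkn (-3*zR^2) (-3*zR)).irreducible_iff_irreducible_map_fraction_map
      (K := Kc)).mp hr1
    rwa [map_tri] at this
  have hr2K : Irreducible (X^n + C (φR (-3*zR)) * X^(n-m) + C (φR (-3*zR^2)) : Kc[X]) := by
    have := ((tri_monic hkn (-3*zR) (-3*zR^2)).irreducible_iff_irreducible_map_fraction_map
      (K := Kc)).mp hr2
    rwa [map_tri] at this
  have hzero_aux : ∀ x : Rc, x = -3*zR ∨ x = -3*zR^2 → φR x ≠ 0 := by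
    intro x hx h
    have hx0 : x = 0 := hφRinj (by rw [h, map_zero])
    rcases hx with hx | hx
    · rw [hx0] at hx
      have h3 : (3:Rc) * zR = 0 := by linear_combination hx
      rcases mul_eq_zero.mp h3 with h4 | h4
      · exact three_Rc_ne_zero h4
      · exact zR_ne_zero h4
    · rw [hx0] at hx
      have h3 : (3:Rc) * (zR*zR) = 0 := by linear_combination hx
      rcases mul_eq_zero.mp h3 with h4 | h4
      · exact three_Rc_ne_zero h4
      · rcases mul_eq_zero.mp h4 with h5 | h5 <;> exact zR_ne_zero h5
  have hd1ne : φR (-3*zR) ≠ 0 := hzero_aux _ (Or.inl rfl)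
  have hd2ne : φR (-3*zR^2) ≠ 0 := hzero_aux _ (Or.inr rfl)
  set h₁ : Kc[X] := C (φR (-3*zR)) * X^n + C (φR (-3*zR^2)) * X^m + 1 with hh1def
  set h₂ : Kc[X] := C (φR (-3*zR^2)) * X^n + C (φR (-3*zR)) * X^m + 1 with hh2def
  have hh₁ : Irreducible h₁ := by
    have h0 : (X^n + C (φR (-3*zR^2)) * X^(n-m) + C (φR (-3*zR)) : Kc[X]).coeff 0 ≠ 0 := by
      rw [tri_coeff, if_neg (by omega), if_neg (by omega), if_pos rfl]
      simpa using hd1ne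
    have hrev := irreducible_reverse hr1K h0
    rwa [tri_reverse hkn, hnm] at hrev
  have hh₂ : Irreducible h₂ := by
    have h0 : (X^n + C (φR (-3*zR)) * X^(n-m) + C (φR (-3*zR^2)) : Kc[X]).coeff 0 ≠ 0 := by
      rw [tri_coeff, if_neg (by omega), if_neg (by omega), if_pos rfl]
      simpa using hd2ne
    have hrev := irreducible_reverse hr2K h0
    rwa [tri_reverse hkn, hnm] at hrev
  -- constants
  have hCa : (3:Kc[X]) * C (φ (1/3)) = 1 := by
    have hx : (3:Kc) * φ (1/3) = 1 := by
      rw [show (3:Kc) = φ 3 by simp, ← map_mul]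
      norm_num
    rw [show ((3:Kc[X])) = C (3:Kc) from (map_ofNat C 3).symm, ← C_mul, hx, C_1]
  have hCb : (9:Kc[X]) * C (φ (1/9)) = 1 := by
    have hx : (9:Kc) * φ (1/9) = 1 := by
      rw [show (9:Kc) = φ 9 by simp, ← map_mul]
      norm_num
    rw [show ((9:Kc[X])) = C (9:Kc) from (map_ofNat C 9).symm, ← C_mul, hx, C_1]
  have hgmap : g.map φ = X^(2*n) - X^(n+m) + X^(2*m) + C (φ (1/3)) * X^n + C (φ (1/3)) * X^m
      + C (φ (1/9)) := by
    rw [hg]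
    simp only [Polynomial.map_add, Polynomial.map_sub, Polynomial.map_pow, Polynomial.map_mul,
      map_X, map_C]
  have hphi1 : φR (-3*zR) = -3 * zk := by
    rw [hzk, map_mul, map_neg, map_ofNat]
  have hphi2 : φR (-3*zR^2) = -3 * zk^2 := by
    rw [hzk, map_mul, map_neg, map_ofNat, map_pow]
  have hCd1 : C (φR (-3*zR)) = -3 * C zk := by
    rw [hphi1, C_mul, C_neg, map_ofNat]
  have hCd2 : C (φR (-3*zR^2)) = -3 * (C zk)^2 := by
    rw [hphi2, C_mul, C_neg, map_ofNat, C_pow]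
  have hzq' : (C zk)^2 + C zk + 1 = (0 : Kc[X]) := by
    rw [← C_pow, ← C_1, ← C_add, ← C_add, hzkq, C_0]
  have hiden : C (9:Kc) * g.map φ = h₁ * h₂ := by
    rw [hgmap, hh1def, hh2def, hCd1, hCd2]
    rw [show (2*n) = n*2 by ring, show (2*m) = m*2 by ring, pow_mul, pow_mul, pow_add]
    rw [show C (9:Kc) = (9:Kc[X]) from map_ofNat C 9]
    linear_combination (-(9:Kc[X])*(C zk - 1)*((X^n)^2 + (X^m)^2)
      - 9*((C zk)^2 - C zk + 1)*((X^n)*(X^m)) + 3*(X^n:Kc[X]) + 3*(X^m)) * hzq'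
      + (3*(X^n:Kc[X]) + 3*(X^m)) * hCa + hCb
  -- degrees and coefficients of h₁ h₂
  have hmn : m < n := h1
  have hdeg1 : h₁.natDegree = n := by
    rw [hh1def, show (1:Kc[X]) = C 1 from C_1.symm]
    exact gtri_natDegree hmn hd1ne _ _
  have hdeg2 : h₂.natDegree = n := by
    rw [hh2def, show (1:Kc[X]) = C 1 from C_1.symm]
    exact gtri_natDegree hmn hd2ne _ _
  have hc01 : h₁.coeff 0 = 1 := by
    rw [hh1def, show (1:Kc[X]) = C 1 from C_1.symm, gtri_coeff,
      if_neg (by omega), if_neg (by omega), if_pos rfl]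
    ring
  have hc02 : h₂.coeff 0 = 1 := by
    rw [hh2def, show (1:Kc[X]) = C 1 from C_1.symm, gtri_coeff,
      if_neg (by omega), if_neg (by omega), if_pos rfl]
    ring
  have hcn1 : h₁.coeff n = φR (-3*zR) := by
    rw [hh1def, show (1:Kc[X]) = C 1 from C_1.symm, gtri_coeff,
      if_pos rfl, if_neg (by omega), if_neg (by omega)]
    ring
  have hcn2 : h₂.coeff n = φR (-3*zR^2) := by
    rw [hh2def, show (1:Kc[X]) = C 1 from C_1.symm, gtri_coeff,
      if_pos rfl, if_neg (by omega), if_neg (by omega)]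
    ring
  have hnotassoc : ¬ Associated h₁ h₂ := by
    intro ⟨w, hw⟩
    obtain ⟨e, heu, hew⟩ := Polynomial.isUnit_iff.mp w.isUnit
    rw [← hew] at hw
    have he1 : e = 1 := by
      have := congrArg (fun P => P.coeff 0) hw
      simpa [coeff_mul_C, hc01, hc02] using this
    rw [he1, C_1, mul_one] at hw
    have := congrArg (fun P => P.coeff n) hw
    simp only [hcn1, hcn2] at this
    exact d_ne (hφRinj this)
  -- the key case lemma
  have keycase : ∀ (p' : ℚ[X]) (h' : Kc[X]) (D : Kc), Irreducible h' → h'.natDegree = n →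
      h'.coeff 0 = 1 → h'.coeff n = D → h' ∣ p'.map φ → (p'.map φ).natDegree = n →
      ∃ v : ℚ, φ v = D := by
    intro p' h' D hirr hdn hc0 hcn hdvd hdeg'
    obtain ⟨w, hw⟩ := hdvd
    have hwne : w ≠ 0 := by
      intro h
      rw [h, mul_zero] at hw
      rw [hw] at hdeg'
      simp at hdeg'
      omega
    have hwdeg : w.natDegree = 0 := by
      have h3 := natDegree_mul hirr.ne_zero hwne
      rw [← hw, hdeg', hdn] at h3
      omega
    have hwC : w = C (w.coeff 0) := eq_C_of_natDegree_eq_zero hwdeg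
    set e := w.coeff 0 with hedef
    have hene : e ≠ 0 := by
      intro h
      rw [hwC, h, C_0] at hwne
      exact hwne rfl
    have hcoeff0 : φ (p'.coeff 0) = e := by
      have := congrArg (fun P => P.coeff 0) hw
      simp only [coeff_map] at this ⊢
      rw [this, hwC, coeff_mul_C, hc0, one_mul]
    have hcoeffn : φ (p'.coeff n) = D * e := by
      have := congrArg (fun P => P.coeff n) hw
      simp only [coeff_map] at this ⊢
      rw [this, hwC, coeff_mul_C, hcn]
    refine ⟨p'.coeff n / p'.coeff 0, ?_⟩
    rw [map_div₀, hcoeff0, hcoeffn, mul_div_assoc, div_self hene, mul_one]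
  -- final: zk not rational
  have hznotrat : ∀ v : ℚ, φ v ≠ zk := by
    intro v hv
    have h3 : φ (v^2 + v + 1) = 0 := by
      rw [map_add, map_add, map_pow, map_one, hv, hzkq]
    have h4 : v^2 + v + 1 = 0 := by
      have := hφinj (by rw [h3, map_zero] : φ (v^2+v+1) = φ 0)
      exact this
    nlinarith [sq_nonneg (2*v+1)]
  have hgetv : ∀ D : Rc, (D = -3*zR ∨ D = -3*zR^2) → (∃ v : ℚ, φ v = φR D) → False := by
    rintro D hD ⟨v, hv⟩
    have hphi3 : φ (3:ℚ) = (3:Kc) := map_ofNat φ 3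
    have h3K : (3:Kc) ≠ 0 := by norm_num
    rcases hD with hD | hD
    · -- φ v = -3 zk : zk = φ (-v/3)
      apply hznotrat (-v/3)
      rw [hD, hphi1] at hv
      rw [map_div₀, map_neg, hv, hphi3]
      field_simp
    · -- φ v = -3 zk^2 : zk^2 = φ(-v/3), zk = zk^4 = (φ(-v/3))^2
      rw [hD, hphi2] at hv
      have hzk2 : φ (-v/3) = zk^2 := by
        rw [map_div₀, map_neg, hv, hphi3]
        field_simp
      apply hznotrat ((-v/3)^2)
      rw [map_pow, hzk2]
      have hz3 : zk^3 = 1 := by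
        have := congrArg φR zR_pow
        simpa [map_pow] using this
      calc (zk^2)^2 = zk^3 * zk := by ring
        _ = zk := by rw [hz3, one_mul]
  -- now the irreducibility proof
  constructor
  · intro hu
    have hu2 : IsUnit (g.map φ) := hu.map (Polynomial.mapRingHom φ)
    have hu3 : IsUnit (C (9:Kc) * g.map φ) := by
      refine IsUnit.mul ?_ hu2
      exact isUnit_C.mpr (by norm_num)
    rw [hiden] at hu3
    exact hh₁.not_isUnit (isUnit_of_mul_isUnit_left hu3)
  · intro p q hpq
    by_contra hcon
    push_neg at hcon
    obtain ⟨hpu, hqu⟩ := hcon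
    have hgKne : g.map φ ≠ 0 := by
      intro h
      have h9 : h₁ * h₂ = 0 := by rw [← hiden, h, mul_zero]
      rcases mul_eq_zero.mp h9 with h' | h'
      · exact hh₁.ne_zero h'
      · exact hh₂.ne_zero h'
    have hgne : g ≠ 0 := fun h => hgKne (by rw [h, Polynomial.map_zero])
    have hpne : p ≠ 0 := fun h => hgne (by rw [hpq, h, zero_mul])
    have hqne : q ≠ 0 := fun h => hgne (by rw [hpq, h, mul_zero])
    have hpd : 1 ≤ p.natDegree := by
      by_contra h
      push_neg at h
      have h0 : p.natDegree = 0 := by omega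
      exact hpu (by
        rw [eq_C_of_natDegree_eq_zero h0]
        exact isUnit_C.mpr (isUnit_iff_ne_zero.mpr (fun hh => hpne (by
          rw [eq_C_of_natDegree_eq_zero h0, hh, C_0]))))
    have hqd : 1 ≤ q.natDegree := by
      by_contra h
      push_neg at h
      have h0 : q.natDegree = 0 := by omega
      exact hqu (by
        rw [eq_C_of_natDegree_eq_zero h0]
        exact isUnit_C.mpr (isUnit_iff_ne_zero.mpr (fun hh => hqne (by
          rw [eq_C_of_natDegree_eq_zero h0, hh, C_0]))))
    have hpKdeg : (p.map φ).natDegree = p.natDegree := natDegree_map_eq_of_injective hφinj p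
    have hqKdeg : (q.map φ).natDegree = q.natDegree := natDegree_map_eq_of_injective hφinj q
    have hpKne : p.map φ ≠ 0 := (Polynomial.map_ne_zero_iff hφinj).mpr hpne
    have hqKne : q.map φ ≠ 0 := (Polynomial.map_ne_zero_iff hφinj).mpr hqne
    have hpKmul : (p.map φ) * (q.map φ) = g.map φ := by
      rw [← Polynomial.map_mul, ← hpq]
    have hgKdvd : g.map φ ∣ h₁ * h₂ := ⟨C (9:Kc), by rw [← hiden]; ring⟩
    have hdegsum : (p.map φ).natDegree + (q.map φ).natDegree = 2*n := by
      have hgKdeg : (g.map φ).natDegree = 2*n := by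
        have h9 : (C (9:Kc) * g.map φ).natDegree = (g.map φ).natDegree :=
          natDegree_C_mul (by norm_num)
        rw [← h9, hiden, natDegree_mul hh₁.ne_zero hh₂.ne_zero, hdeg1, hdeg2]
        omega
      rw [← hgKdeg, ← hpKmul, natDegree_mul hpKne hqKne]
    have getdvd : ∀ s : ℚ[X], s ≠ 0 → ¬ IsUnit s → h₁ ∣ s.map φ ∨ h₂ ∣ s.map φ → False →
      True := fun _ _ _ _ _ => trivial
    have hfac : ∀ s : ℚ[X], s.map φ ≠ 0 → 1 ≤ (s.map φ).natDegree → s.map φ ∣ g.map φ →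
        h₁ ∣ s.map φ ∨ h₂ ∣ s.map φ := by
      intro s hsne hsdeg hsdvd
      have hsu : ¬ IsUnit (s.map φ) := by
        intro hu'
        have := natDegree_eq_zero_of_isUnit hu'
        omega
      obtain ⟨ρ, hρirr, hρdvd⟩ := WfDvdMonoid.exists_irreducible_factor hsu hsne
      have hρ2 : ρ ∣ h₁ * h₂ := hρdvd.trans (hsdvd.trans hgKdvd)
      have hρprime : Prime ρ := UniqueFactorizationMonoid.irreducible_iff_prime.mp hρirr
      rcases hρprime.2.2 _ _ hρ2 with h' | h'
      · left
        exact ((hρirr.associated_of_dvd hh₁ h').symm.dvd).trans hρdvd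
      · right
        exact ((hρirr.associated_of_dvd hh₂ h').symm.dvd).trans hρdvd
    have hpdvdg : p.map φ ∣ g.map φ := ⟨q.map φ, hpKmul.symm⟩
    have hqdvdg : q.map φ ∣ g.map φ := ⟨p.map φ, by rw [← hpKmul]; ring⟩
    have hA := hfac p hpKne (by omega) hpdvdg
    have hB := hfac q hqKne (by omega) hqdvdg
    -- rule out same-factor cases
    have hsame : ∀ h' : Kc[X], Irreducible h' → h' ∣ p.map φ → h' ∣ q.map φ →
        h' * h' ∣ h₁ * h₂ := by
      intro h' _ hp' hq'
      exact (mul_dvd_mul hp' hq').trans (by rw [hpKmul]; exact hgKdvd)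
    rcases hA with hA | hA <;> rcases hB with hB | hB
    · have hh := hsame h₁ hh₁ hA hB
      have : h₁ ∣ h₂ := (mul_dvd_mul_iff_left hh₁.ne_zero).mp hh
      exact hnotassoc (hh₁.associated_of_dvd hh₂ this)
    · -- h₁ ∣ p, h₂ ∣ q
      have hd1 : n ≤ (p.map φ).natDegree := by
        have := natDegree_le_of_dvd hA hpKne
        omega
      have hd2 : n ≤ (q.map φ).natDegree := by
        have := natDegree_le_of_dvd hB hqKne
        omega
      have hpn : (p.map φ).natDegree = n := by omega
      exact hgetv _ (Or.inl rfl) (keycase p h₁ _ hh₁ hdeg1 hc01 hcn1 hA hpn)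
    · -- h₂ ∣ p, h₁ ∣ q
      have hd1 : n ≤ (p.map φ).natDegree := by
        have := natDegree_le_of_dvd hA hpKne
        omega
      have hd2 : n ≤ (q.map φ).natDegree := by
        have := natDegree_le_of_dvd hB hqKne
        omega
      have hpn : (p.map φ).natDegree = n := by omega
      exact hgetv _ (Or.inr rfl) (keycase p h₂ _ hh₂ hdeg2 hc02 hcn2 hA hpn)
    · have hh := hsame h₂ hh₂ hA hB
      have : h₂ ∣ h₁ := by
        have h9 : h₂ * h₂ ∣ h₂ * h₁ := by rwa [mul_comm h₁ h₂] at hh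
        exact (mul_dvd_mul_iff_left hh₂.ne_zero).mp h9
      exact hnotassoc (hh₂.associated_of_dvd hh₁ this).symm

lemma int_tri_irred {n k : ℕ} (hk0 : 0 < k) (hkn : k < n) :
    Irreducible (X^n + C (-3:ℤ) * X^k + C (-3:ℤ)) := by
  have hmon : (X^n + C (-3:ℤ) * X^k + C (-3:ℤ)).Monic := tri_monic hkn _ _
  have hdeg : (X^n + C (-3:ℤ) * X^k + C (-3:ℤ)).natDegree = n := tri_natDegree hkn _ _
  have heis : (X^n + C (-3:ℤ) * X^k + C (-3:ℤ)).IsEisensteinAt (Ideal.span {3}) := by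
    constructor
    · rw [hmon.leadingCoeff]
      rw [Ideal.mem_span_singleton]
      norm_num
    · intro j hj
      rw [hdeg] at hj
      rw [tri_coeff, if_neg (by omega)]
      rw [Ideal.mem_span_singleton]
      split_ifs <;> norm_num
    · rw [tri_coeff, if_neg (by omega), if_neg (by omega), if_pos rfl]
      rw [pow_two, Ideal.span_singleton_mul_span_singleton, Ideal.mem_span_singleton]
      norm_num
  exact heis.irreducible (Ideal.span_singleton_prime (by norm_num)|>.mpr Int.prime_three)
    hmon.isPrimitive (by omega)

lemma rat_tri_irred {n k : ℕ} (hk0 : 0 < k) (hkn : k < n) :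
    Irreducible (X^n + C (-3:ℚ) * X^k + C (-3:ℚ)) := by
  have hmon : (X^n + C (-3:ℤ) * X^k + C (-3:ℤ)).Monic := tri_monic hkn _ _
  have := (hmon.irreducible_iff_irreducible_map_fraction_map (K := ℚ)).mp (int_tri_irred hk0 hkn)
  rwa [map_tri] at this
  
lemma first_factor_irred {n m : ℕ} (h1 : n > m) (h2 : m ≥ 1) :
    Irreducible ((X : ℚ[X])^n + X^m - C (1/3)) := by
  have hk0 : 0 < n - m := by omega
  have hkn : n - m < n := by omega
  have hirr := rat_tri_irred hk0 hkn
  have hrev := irreducible_reverse hirr (by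
    rw [tri_coeff, if_neg (by omega), if_neg (by omega), if_pos rfl]
    norm_num)
  rw [tri_reverse hkn] at hrev
  have hnm : n - (n - m) = m := by omega
  rw [hnm] at hrev
  have hassoc : Associated (C (-3:ℚ) * X^n + C (-3:ℚ) * X^m + 1) ((X : ℚ[X])^n + X^m - C (1/3)) := by
    have hu : IsUnit (C (-1/3 : ℚ)) := isUnit_C.mpr (by norm_num)
    refine ⟨hu.unit, ?_⟩
    rw [IsUnit.unit_spec]
    have h3 : (C (-3:ℚ)) * (C (-1/3:ℚ)) = C 1 := by rw [← C_mul]; norm_num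
    calc (C (-3:ℚ) * X^n + C (-3:ℚ) * X^m + 1) * C (-1/3:ℚ)
        = (C (-3:ℚ) * C (-1/3:ℚ)) * X^n + (C (-3:ℚ) * C (-1/3:ℚ)) * X^m + C (-1/3:ℚ) := by
          ring
      _ = X^n + X^m - C (1/3:ℚ) := by
          rw [h3, C_1, one_mul, one_mul, show (-1/3:ℚ) = -(1/3) by norm_num, C_neg]
          ring
  exact hassoc.irreducible hrev

theorem cube_identity_factorization (n m : ℕ) (h1 : n > m) (h2 : m ≥ 1) :
    ((X : ℚ[X])^(3*n) + X^(3*m) + X^(n+m) - C (1/27) =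
      (X^n + X^m - C (1/3)) *
      (X^(2*n) - X^(n+m) + X^(2*m) + C (1/3) * X^n + C (1/3) * X^m + C (1/9))) ∧
    Irreducible ((X : ℚ[X])^n + X^m - C (1/3)) ∧
    Irreducible ((X : ℚ[X])^(2*n) - X^(n+m) + X^(2*m) +
      C (1/3) * X^n + C (1/3) * X^m + C (1/9)) := by
  refine ⟨?_, first_factor_irred h1 h2, second_factor_irred h1 h2⟩
  have hc3 : (3:ℚ[X]) * C (1/3 : ℚ) = 1 := by
    rw [show ((3:ℚ[X])) = C (3:ℚ) from (map_ofNat C 3).symm, ← C_mul]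
    norm_num
  rw [show (1/27 : ℚ) = (1/3)^3 by norm_num, show (1/9:ℚ) = (1/3)^2 by norm_num, C_pow, C_pow]
  rw [show 3*n = n*3 by ring, show 3*m = m*3 by ring, show 2*n = n*2 by ring,
    show 2*m = m*2 by ring, pow_mul, pow_mul, pow_mul, pow_mul, pow_add]
  linear_combination (-((X:ℚ[X])^n * X^m)) * hc3
end
end

section
/- There is no nonzero rational a and integers n > m > k ≥ 1 such that the polynomial x^n + x^m + x^k + a has a complex root of multiplicity at least 3. -/
lemma four_zmod4 : (4 : ZMod 4) = 0 := by decide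
lemma two_zmod2 : (2 : ZMod 2) = 0 := by decide

lemma aux_sq_zmod4 (c : ℤ) (hc : Odd c) : ((c : ZMod 4))^2 = 1 := by
  obtain ⟨t, rfl⟩ := hc
  push_cast
  linear_combination ((t:ZMod 4)^2 + t) * four_zmod4

lemma aux_no (a' b' : ℕ) (ha : Odd a') (hb : Odd b') (e v : ℤ)
    (hcop : ¬ ((2:ℤ) ∣ e ∧ (2:ℤ) ∣ v))
    (heq : (a':ℤ)^2 * e^(a'+b') + (b':ℤ)^2 * v^(a'+b') = ((a'+b':ℕ):ℤ)^2 * e^(a') * v^(b')) :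
    False := by
  have ha1 : a' ≠ 0 := by rcases ha with ⟨t, rfl⟩; omega
  have hb1 : b' ≠ 0 := by rcases hb with ⟨t, rfl⟩; omega
  have hab : a' + b' ≠ 0 := by omega
  have haZ : ((a' : ℤ) : ZMod 2) = 1 := by
    rcases ha with ⟨t, rfl⟩; push_cast
    linear_combination (t : ZMod 2) * two_zmod2
  have hbZ : ((b' : ℤ) : ZMod 2) = 1 := by
    rcases hb with ⟨t, rfl⟩; push_cast
    linear_combination (t : ZMod 2) * two_zmod2
  rcases Int.even_or_odd e with he | he
  · rcases Int.even_or_odd v with hv | hv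
    · refine hcop ⟨?_, ?_⟩
      · obtain ⟨t, rfl⟩ := he; exact ⟨t, by ring⟩
      · obtain ⟨t, rfl⟩ := hv; exact ⟨t, by ring⟩
    · -- e even, v odd
      have h2 := congrArg (fun t : ℤ => (t : ZMod 2)) heq
      push_cast at h2
      have he0 : ((e : ZMod 2)) = 0 := by
        obtain ⟨t, rfl⟩ := he; push_cast
        linear_combination (t : ZMod 2) * two_zmod2
      have hv1 : ((v : ZMod 2)) = 1 := by
        obtain ⟨t, rfl⟩ := hv; push_cast
        linear_combination (t : ZMod 2) * two_zmod2
      rw [he0, hv1] at h2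
      rw [zero_pow hab, zero_pow ha1] at h2
      push_cast at h2 hbZ
      simp at h2
      rw [hbZ] at h2
      exact one_ne_zero h2
  · rcases Int.even_or_odd v with hv | hv
    · -- e odd, v even
      have h2 := congrArg (fun t : ℤ => (t : ZMod 2)) heq
      push_cast at h2
      have hv0 : ((v : ZMod 2)) = 0 := by
        obtain ⟨t, rfl⟩ := hv; push_cast
        linear_combination (t : ZMod 2) * two_zmod2
      have he1 : ((e : ZMod 2)) = 1 := by
        obtain ⟨t, rfl⟩ := he; push_cast
        linear_combination (t : ZMod 2) * two_zmod2
      rw [hv0, he1] at h2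
      rw [zero_pow hab, zero_pow hb1] at h2
      push_cast at h2 haZ
      simp at h2
      rw [haZ] at h2
      exact one_ne_zero h2
    · -- both odd : mod 4
      have h4 := congrArg (fun t : ℤ => (t : ZMod 4)) heq
      push_cast at h4
      obtain ⟨c, hc⟩ := ha.add_odd hb
      have hsq_e : ((e : ZMod 4))^(a'+b') = 1 := by
        rw [show a'+b' = 2*c by omega, pow_mul, aux_sq_zmod4 e he, one_pow]
      have hsq_v : ((v : ZMod 4))^(a'+b') = 1 := by
        rw [show a'+b' = 2*c by omega, pow_mul, aux_sq_zmod4 v hv, one_pow]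
      have hS0 : (((a'+b' : ℕ) : ℤ) : ZMod 4)^2 = 0 := by
        push_cast [hc]
        linear_combination ((c:ZMod 4)^2) * four_zmod4
      push_cast at hS0
      rw [hsq_e, hsq_v, hS0] at h4
      have haZ4 : ((a' : ℤ) : ZMod 4)^2 = 1 := aux_sq_zmod4 _ (by exact_mod_cast ha)
      have hbZ4 : ((b' : ℤ) : ZMod 4)^2 = 1 := aux_sq_zmod4 _ (by exact_mod_cast hb)
      push_cast at haZ4 hbZ4
      rw [mul_one, mul_one, haZ4, hbZ4] at h4
      simp at h4
      exact (by decide : ¬ ((1 : ZMod 4) + 1 = 0)) h4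

open Polynomial

set_option maxHeartbeats 1000000 in
theorem no_triple_root (a : ℚ) (ha : a ≠ 0) (n m k : ℕ) (h1 : n > m) (h2 : m > k)
    (h3 : k ≥ 1) (z : ℂ) :
    rootMultiplicity z
      (((X : ℚ[X])^n + X^m + X^k + C a).map (algebraMap ℚ ℂ)) < 3 := by
  by_contra hcon
  push_neg at hcon
  set P : ℂ[X] := ((X : ℚ[X])^n + X^m + X^k + C a).map (algebraMap ℚ ℂ) with hPdef
  have hdvd : (X - C z)^3 ∣ P :=
    dvd_trans (pow_dvd_pow _ hcon) (Polynomial.pow_rootMultiplicity_dvd P z)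
  obtain ⟨q, hq⟩ := hdvd
  have hder1 : derivative P = (X - C z)^2 * (C 3 * q + (X - C z) * derivative q) := by
    rw [hq]; simp [derivative_mul, derivative_pow]; ring
  have hder2 : derivative (derivative P) =
      (X - C z) * (C 2 * (C 3 * q + (X - C z) * derivative q)
        + (X - C z) * derivative (C 3 * q + (X - C z) * derivative q)) := by
    rw [hder1]; simp [derivative_mul, derivative_pow]; ring
  have ev0 : P.eval z = 0 := by rw [hq]; simp
  have ev1 : (derivative P).eval z = 0 := by rw [hder1]; simp
  have ev2 : (derivative (derivative P)).eval z = 0 := by rw [hder2]; simp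
  have hPX : P = X^n + X^m + X^k + C ((a:ℂ)) := by
    rw [hPdef]; simp [Polynomial.map_add, Polynomial.map_pow]
  rw [hPX] at ev0 ev1 ev2
  have h0 : z^n + z^m + z^k + (a:ℂ) = 0 := by simpa using ev0
  have hd1 : (n:ℂ) * z^(n-1) + m * z^(m-1) + k * z^(k-1) = 0 := by
    simpa [derivative_add, derivative_X_pow] using ev1
  have hd2 : (n:ℂ) * ((n-1 : ℕ) * z^(n-1-1)) + m * ((m-1 : ℕ) * z^(m-1-1))
      + k * ((k-1 : ℕ) * z^(k-1-1)) = 0 := by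
    have := ev2
    simp [derivative_add, derivative_X_pow, derivative_mul] at this
    push_cast [Nat.cast_sub (show 1 ≤ n by omega), Nat.cast_sub (show 1 ≤ m by omega),
      Nat.cast_sub h3] at this ⊢
    linear_combination this

  have hz : z ≠ 0 := by
    intro h
    rw [h] at h0
    simp [zero_pow (by omega : n ≠ 0), zero_pow (by omega : m ≠ 0),
      zero_pow (by omega : k ≠ 0)] at h0
    exact ha (by exact_mod_cast h0)
  -- first power-sum equation
  have e1 : z^(n-1) * z = z^n := by rw [← pow_succ]; congr 1; omega
  have e2 : z^(m-1) * z = z^m := by rw [← pow_succ]; congr 1; omega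
  have e3 : z^(k-1) * z = z^k := by rw [← pow_succ]; congr 1; omega
  have P1 : (n:ℂ) * z^n + m * z^m + k * z^k = 0 := by
    linear_combination z * hd1 - (n:ℂ) * e1 - (m:ℂ) * e2 - (k:ℂ) * e3
  have key : ∀ j : ℕ, 1 ≤ j →
      (j:ℂ) * ((j-1 : ℕ) * z^(j-1-1)) * z^2 + (j:ℂ) * z^(j-1) * z = (j:ℂ)^2 * z^j := by
    intro j hj
    rcases Nat.lt_or_ge j 2 with hj2 | hj2
    · interval_cases j
      simp
    · have c : ((j-1 : ℕ) : ℂ) = (j:ℂ) - 1 := by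
        push_cast [Nat.cast_sub (by omega : 1 ≤ j)]; ring
      have e : z^(j-1-1) * z^2 = z^j := by rw [← pow_add]; congr 1; omega
      have e' : z^(j-1) * z = z^j := by rw [← pow_succ]; congr 1; omega
      rw [c]
      linear_combination ((j:ℂ) * ((j:ℂ)-1)) * e + (j:ℂ) * e'
  have P2 : (n:ℂ)^2 * z^n + (m:ℂ)^2 * z^m + (k:ℂ)^2 * z^k = 0 := by
    linear_combination z^2 * hd2 + z * hd1 - key n (by omega) - key m (by omega) - key k h3
  -- exponent gaps
  set A := n - m with hAdef
  set B := m - k with hBdef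
  have hA : 0 < A := by omega
  have hB : 0 < B := by omega
  have cA : ((A:ℕ):ℂ) = (n:ℂ) - m := by push_cast [hAdef, Nat.cast_sub h1.le]; ring
  have cB : ((B:ℕ):ℂ) = (m:ℂ) - k := by push_cast [hBdef, Nat.cast_sub h2.le]; ring
  have cAB : ((A+B:ℕ):ℂ) = (n:ℂ) - k := by
    push_cast [hAdef, hBdef, Nat.cast_sub h1.le, Nat.cast_sub h2.le]; ring
  have hzm : z^m ≠ 0 := pow_ne_zero _ hz
  have hzk : z^k ≠ 0 := pow_ne_zero _ hz
  have hnAB : z^n = z^A * z^m := by rw [← pow_add]; congr 1; omega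
  have hmBk : z^m = z^B * z^k := by rw [← pow_add]; congr 1; omega
  -- z^A and z^B are explicit rationals
  have hA1 : ((n:ℂ) * (A+B:ℕ)) * z^A = -((m:ℂ) * (B:ℕ)) := by
    have Q1 : (((n:ℂ) * (A+B:ℕ)) * z^A + (m:ℂ) * (B:ℕ)) * z^m = 0 := by
      rw [cAB, cB]
      linear_combination P2 - (k:ℂ) * P1 - ((n:ℂ)*((n:ℂ)-k)) * hnAB
    rcases mul_eq_zero.1 Q1 with h | h
    · linear_combination h
    · exact absurd h hzm
  have hB1 : ((m:ℂ) * (A:ℕ)) * z^B = -((k:ℂ) * (A+B:ℕ)) := by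
    have Q2 : (((m:ℂ) * (A:ℕ)) * z^B + (k:ℂ) * (A+B:ℕ)) * z^k = 0 := by
      rw [cAB, cA]
      linear_combination (n:ℂ) * P1 - P2 - ((m:ℂ)*((n:ℂ)-(m:ℂ))) * hmBk
    rcases mul_eq_zero.1 Q2 with h | h
    · linear_combination h
    · exact absurd h hzk
  -- rational values
  set r : ℚ := -((m:ℚ) * B) / ((n:ℚ) * (A+B)) with hrdef
  set s : ℚ := -((k:ℚ) * (A+B)) / ((m:ℚ) * A) with hsdef
  have hnQ : (0:ℚ) < n := by exact_mod_cast (by omega : 0 < n)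
  have hmQ : (0:ℚ) < m := by exact_mod_cast (by omega : 0 < m)
  have hkQ : (0:ℚ) < k := by exact_mod_cast h3
  have hAQ : (0:ℚ) < A := by exact_mod_cast hA
  have hBQ : (0:ℚ) < B := by exact_mod_cast hB
  have hABQ : (0:ℚ) < (A:ℚ) + B := by linarith
  have hr0 : r < 0 := by
    rw [hrdef]
    apply div_neg_of_neg_of_pos
    · exact neg_lt_zero.2 (mul_pos hmQ hBQ)
    · exact mul_pos hnQ hABQ
  have hs0 : s < 0 := by
    rw [hsdef]
    apply div_neg_of_neg_of_pos
    · exact neg_lt_zero.2 (mul_pos hkQ hABQ)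
    · exact mul_pos hmQ hAQ
  have hrne : r ≠ 0 := ne_of_lt hr0
  have hsne : s ≠ 0 := ne_of_lt hs0
  have hnC : ((n:ℂ) * ((A:ℂ) + B)) ≠ 0 := by
    apply mul_ne_zero
    · exact_mod_cast Nat.cast_ne_zero.2 (by omega : n ≠ 0)
    · have : ((A+B:ℕ):ℂ) ≠ 0 := Nat.cast_ne_zero.2 (by omega)
      push_cast at this; exact this
  have hmC : ((m:ℂ) * (A:ℂ)) ≠ 0 := by
    apply mul_ne_zero
    · exact_mod_cast Nat.cast_ne_zero.2 (by omega : m ≠ 0)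
    · exact Nat.cast_ne_zero.2 (by omega)
  have hrC : ((r:ℚ):ℂ) = z^A := by
    rw [hrdef]
    push_cast
    rw [div_eq_iff hnC]
    push_cast at hA1
    linear_combination -hA1
  have hsC : ((s:ℚ):ℂ) = z^B := by
    rw [hsdef]
    push_cast
    rw [div_eq_iff hmC]
    push_cast at hB1
    linear_combination -hB1
  -- zpow machinery
  have hzpz : ∀ (t u' : ℤ), (z ^ t) ^ u' = z ^ (t * u') := by
    intro t u'
    have hu : ∀ (c : ℤ), z ^ c = ((Units.mk0 z hz ^ c : ℂˣ) : ℂ) := by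
      intro c; rw [Units.val_zpow_eq_zpow_val]; rfl
    rw [hu t, hu (t*u'), ← Units.val_zpow_eq_zpow_val, ← zpow_mul]
  have hznat : ∀ (c : ℕ), z ^ c = z ^ ((c:ℕ):ℤ) := fun c => (zpow_natCast z c).symm
  -- Bezout
  set d := Nat.gcd A B with hddef
  have hd0 : 0 < d := Nat.gcd_pos_of_pos_left _ hA
  set A' := A / d with hA'def
  set B' := B / d with hB'def
  have hA'd : d * A' = A := Nat.mul_div_cancel' (Nat.gcd_dvd_left A B)
  have hB'd : d * B' = B := Nat.mul_div_cancel' (Nat.gcd_dvd_right A B)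
  have hcop : Nat.Coprime A' B' := Nat.coprime_div_gcd_div_gcd hd0
  have hA'0 : 0 < A' := by
    rcases Nat.eq_zero_or_pos A' with h | h
    · rw [h, mul_zero] at hA'd; omega
    · exact h
  have hB'0 : 0 < B' := by
    rcases Nat.eq_zero_or_pos B' with h | h
    · rw [h, mul_zero] at hB'd; omega
    · exact h
  set x := Nat.gcdA A B with hxdef
  set y := Nat.gcdB A B with hydef
  have hbez : (d:ℤ) = A * x + B * y := Nat.gcd_eq_gcd_ab A B
  set w : ℚ := r ^ x * s ^ y with hwdef
  have hwC : ((w:ℚ):ℂ) = z ^ ((d:ℕ):ℤ) := by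
    rw [hwdef]
    push_cast [Rat.cast_zpow]
    rw [hrC, hsC, hznat A, hznat B, hzpz, hzpz, ← zpow_add₀ hz]
    rw [hbez]
  have hzdA : ((w ^ A' : ℚ) : ℂ) = z ^ (A:ℕ) := by
    push_cast
    rw [hwC, hznat A, ← zpow_natCast (z ^ ((d:ℕ):ℤ)), hzpz]
    congr 1
    exact_mod_cast congrArg (Nat.cast : ℕ → ℤ) hA'd
  have hwA' : w ^ A' = r := by
    have : ((w ^ A' : ℚ) : ℂ) = ((r:ℚ):ℂ) := by rw [hzdA, hrC]
    exact_mod_cast this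
  have hzdB : ((w ^ B' : ℚ) : ℂ) = z ^ (B:ℕ) := by
    push_cast
    rw [hwC, hznat B, ← zpow_natCast (z ^ ((d:ℕ):ℤ)), hzpz]
    congr 1
    exact_mod_cast congrArg (Nat.cast : ℕ → ℤ) hB'd
  have hwB' : w ^ B' = s := by
    have : ((w ^ B' : ℚ) : ℂ) = ((s:ℚ):ℂ) := by rw [hzdB, hsC]
    exact_mod_cast this
  -- parity of A', B' and sign of w
  have hA'odd : Odd A' := by
    rw [← Nat.not_even_iff_odd]
    intro hev
    have := hev.pow_nonneg w
    rw [hwA'] at this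
    linarith
  have hB'odd : Odd B' := by
    rw [← Nat.not_even_iff_odd]
    intro hev
    have := hev.pow_nonneg w
    rw [hwB'] at this
    linarith
  have hw0 : w < 0 := by
    rcases lt_trichotomy w 0 with h | h | h
    · exact h
    · rw [← hwA', h, zero_pow (by omega : A' ≠ 0)] at hr0; linarith
    · have := pow_pos h A'
      rw [hwA'] at this; linarith
  -- numerator and denominator
  set u : ℤ := w.num with hudef
  set v : ℤ := (w.den : ℤ) with hvdef
  have hv0 : (0:ℤ) < v := by rw [hvdef]; exact_mod_cast w.pos
  have hu0 : u < 0 := by rw [hudef]; exact Rat.num_neg.2 hw0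
  have hvQ : ((v:ℚ)) ≠ 0 := by
    intro h
    rw [Int.cast_eq_zero] at h; omega
  have hwuv : (w : ℚ) = (u:ℚ) / (v:ℚ) := by
    rw [hudef, hvdef]; push_cast; exact (Rat.num_div_den w).symm
  -- integer equations
  have hq1 : (u:ℚ)^A' * ((n:ℚ)*((A:ℚ)+B)) = -((m:ℚ)*B) * (v:ℚ)^A' := by
    have h := hwA'
    rw [hwuv, div_pow, hrdef, div_eq_div_iff (pow_ne_zero _ hvQ) (by positivity)] at h
    push_cast at h ⊢
    linear_combination h
  have hq2 : (u:ℚ)^B' * ((m:ℚ)*A) = -((k:ℚ)*((A:ℚ)+B)) * (v:ℚ)^B' := by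
    have h := hwB'
    rw [hwuv, div_pow, hsdef, div_eq_div_iff (pow_ne_zero _ hvQ) (by positivity)] at h
    push_cast at h ⊢
    linear_combination h
  have E1 : u^A' * ((n:ℤ)*((A:ℤ)+B)) = -((m:ℤ)*B) * v^A' := by exact_mod_cast hq1
  have E2 : u^B' * ((m:ℤ)*A) = -((k:ℤ)*((A:ℤ)+B)) * v^B' := by exact_mod_cast hq2
  set S := A' + B' with hSdef
  have cdA : (A:ℤ) = (d:ℤ) * A' := by exact_mod_cast (congrArg (Nat.cast : ℕ → ℤ) hA'd).symm
  have cdB : (B:ℤ) = (d:ℤ) * B' := by exact_mod_cast (congrArg (Nat.cast : ℕ → ℤ) hB'd).symm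
  have hdZ : (d:ℤ) ≠ 0 := by exact_mod_cast Nat.pos_iff_ne_zero.1 hd0
  have E1' : (S:ℤ) * n * u^A' = -((B':ℤ) * m) * v^A' := by
    apply mul_left_cancel₀ hdZ
    push_cast [hSdef]
    linear_combination E1 - (u^A'*(n:ℤ)) * cdA - (u^A'*(n:ℤ)) * cdB - (v^A' * (m:ℤ)) * cdB
  have E2' : (A':ℤ) * m * u^B' = -((S:ℤ) * k) * v^B' := by
    apply mul_left_cancel₀ hdZ
    push_cast [hSdef]
    linear_combination E2 - (u^B'*(m:ℤ)) * cdA - (v^B' * (k:ℤ)) * cdA - (v^B' * (k:ℤ)) * cdB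
  -- linear identity S*m = A'*k + B'*n
  have znm : (n:ℤ) - m = (d:ℤ) * A' := by
    rw [← cdA, hAdef]; push_cast [Nat.cast_sub h1.le]; ring
  have zmk : (m:ℤ) - k = (d:ℤ) * B' := by
    rw [← cdB, hBdef]; push_cast [Nat.cast_sub h2.le]; ring
  have hlin : (S:ℤ) * m = (A':ℤ) * k + (B':ℤ) * n := by
    push_cast [hSdef]
    linear_combination (A':ℤ) * zmk - (B':ℤ) * znm
  -- key integer equation
  have huS : u^S = u^A' * u^B' := by rw [hSdef, pow_add]
  have hvS : v^S = v^A' * v^B' := by rw [hSdef, pow_add]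
  have keyE : (m:ℤ) * ((A':ℤ)^2 * u^S + (B':ℤ)^2 * v^S + (S:ℤ)^2 * u^A' * v^B') = 0 := by
    linear_combination ((S:ℤ)*u^A'*v^B') * hlin + ((A':ℤ)*u^A') * E2' + ((B':ℤ)*v^B') * E1'
      + ((m:ℤ)*(A':ℤ)^2) * huS + ((m:ℤ)*(B':ℤ)^2) * hvS
  have hmZ : (m:ℤ) ≠ 0 := by exact_mod_cast (by omega : m ≠ 0)
  have keyE2 : (A':ℤ)^2 * u^S + (B':ℤ)^2 * v^S + (S:ℤ)^2 * u^A' * v^B' = 0 :=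
    (mul_eq_zero.1 keyE).resolve_left hmZ
  -- substitute u = -e
  set e : ℤ := -u with hedef
  have hue : u = -e := by omega
  have hSeven : Even S := hA'odd.add_odd hB'odd
  have h1e : u^S = e^S := by rw [hue, hSeven.neg_pow]
  have h2e : u^A' = -(e^A') := by rw [hue, hA'odd.neg_pow]
  have final : (A':ℤ)^2 * e^(A'+B') + (B':ℤ)^2 * v^(A'+B') = ((A'+B':ℕ):ℤ)^2 * e^(A') * v^(B') := by
    rw [← hSdef]
    linear_combination keyE2 - ((A':ℤ)^2)*h1e - ((S:ℤ)^2*v^B')*h2e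
  have hnot : ¬ ((2:ℤ) ∣ e ∧ (2:ℤ) ∣ v) := by
    rintro ⟨hde, hdv⟩
    have hdu : (2:ℤ) ∣ u := by omega
    have hnum : 2 ∣ w.num.natAbs := by
      have := Int.natAbs_dvd_natAbs.2 hdu
      simpa using this
    have hden : 2 ∣ w.den := by
      have := Int.natAbs_dvd_natAbs.2 hdv
      simpa [hvdef] using this
    have := Nat.dvd_gcd hnum hden
    rw [w.reduced] at this
    omega
  exact aux_no A' B' hA'odd hB'odd e v hnot final
end
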